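/- There exists a unique γ_cr > 0 such that Γ(γ_cr) = exp(γ_cr · ψ(γ_cr)), i.e. such that ln Γ(γ_cr) - γ_cr ψ(γ_cr) = 0; moreover γ_cr lies in the interval (1, 2). Equivalently, the function L(λ) = Γ(γ(λ))/λ^{γ(λ)} takes the value 1 at exactly one point λ_cr ∈ (0,∞). -/

import Mathlib

open Real Filter Set

/-- The digamma function `ψ = Γ'/Γ`. -/
noncomputable def digamma (x : ℝ) : ℝ := deriv Real.Gamma x / Real.Gamma x

lemma diffGamma {x : ℝ} (hx : 0 < x) : DifferentiableAt ℝ Real.Gamma x :=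
  Real.differentiableAt_Gamma (fun m => by
    have : (0:ℝ) ≤ m := Nat.cast_nonneg m
    intro h; rw [h] at hx; linarith)

lemma hasDerivAt_logGamma {x : ℝ} (hx : 0 < x) :
    HasDerivAt (fun y => Real.log (Real.Gamma y)) (digamma x) x :=
  (diffGamma hx).hasDerivAt.log (Real.Gamma_pos_of_pos hx).ne'

lemma deriv_logGamma {x : ℝ} (hx : 0 < x) :
    deriv (fun y => Real.log (Real.Gamma y)) x = digamma x :=
  (hasDerivAt_logGamma hx).deriv

lemma convexLG : ConvexOn ℝ (Ioi 0) (fun y => Real.log (Real.Gamma y)) := by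
  have := Real.convexOn_log_Gamma
  simpa [Function.comp_def] using this

lemma psi_mono {a b : ℝ} (ha : 0 < a) (hab : a < b) : digamma a ≤ digamma b := by
  have hb : 0 < b := ha.trans hab
  have h1 := convexLG.deriv_le_slope (mem_Ioi.mpr ha) (mem_Ioi.mpr hb) hab
    (hasDerivAt_logGamma ha).differentiableAt
  have h2 := convexLG.slope_le_deriv (mem_Ioi.mpr ha) (mem_Ioi.mpr hb) hab
    (hasDerivAt_logGamma hb).differentiableAt
  rw [deriv_logGamma ha] at h1
  rw [deriv_logGamma hb] at h2
  linarith

lemma psi_rec {x : ℝ} (hx : 0 < x) : digamma (x + 1) = digamma x + 1 / x := by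
  have h1 : deriv (fun y => Real.log (Real.Gamma y)) (x + 1)
      = deriv (fun y => Real.log (Real.Gamma y)) x + 1 / x := by
    rw [← deriv_comp_add_const, one_div, ← Real.deriv_log,
      ← deriv_fun_add (hasDerivAt_logGamma hx).differentiableAt (Real.differentiableAt_log hx.ne')]
    apply Filter.EventuallyEq.deriv_eq
    filter_upwards [eventually_gt_nhds hx] with y hy
    rw [Real.Gamma_add_one hy.ne', Real.log_mul hy.ne' (Real.Gamma_pos_of_pos hy).ne', add_comm]
  rwa [deriv_logGamma (by linarith), deriv_logGamma hx] at h1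

lemma psi_strictMono {a b : ℝ} (ha : 0 < a) (hab : a < b) : digamma a < digamma b := by
  rcases (psi_mono ha hab).lt_or_eq with h | h
  · exact h
  · exfalso
    have hb : 0 < b := ha.trans hab
    have h1 : digamma (a + 1) ≤ digamma (b + 1) := psi_mono (by linarith) (by linarith)
    rw [psi_rec ha, psi_rec hb, h] at h1
    have h2 : 1 / b < 1 / a := one_div_lt_one_div_of_lt ha hab
    linarith

lemma deriv_gamma_eq {x : ℝ} (hx : 0 < x) :
    deriv Real.Gamma x = (deriv Complex.Gamma (x : ℂ)).re := by
  have h1 : DifferentiableAt ℂ Complex.Gamma (x : ℂ) := by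
    refine Complex.differentiableAt_Gamma _ (fun m => ?_)
    intro h
    have : (x : ℂ).re = (-(m:ℂ)).re := by rw [h]
    simp at this
    have : (0:ℝ) ≤ m := Nat.cast_nonneg m
    linarith
  have h2 : HasDerivAt (fun y : ℝ => (Complex.Gamma (y:ℂ)).re) (deriv Complex.Gamma (x:ℂ)).re x :=
    h1.hasDerivAt.real_of_complex
  have h3 : (fun y : ℝ => (Complex.Gamma (y:ℂ)).re) = Real.Gamma := by
    funext y; rw [Complex.Gamma_ofReal, Complex.ofReal_re]
  rw [h3] at h2
  exact h2.deriv

lemma contOn_digamma : ContinuousOn digamma (Ioi 0) := by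
  have hU : IsOpen {s : ℂ | 0 < s.re} := isOpen_lt continuous_const Complex.continuous_re
  have hd : DifferentiableOn ℂ Complex.Gamma {s : ℂ | 0 < s.re} := by
    intro s hs
    refine (Complex.differentiableAt_Gamma _ (fun m => ?_)).differentiableWithinAt
    intro h
    have : s.re = (-(m:ℂ)).re := by rw [h]
    simp at this
    have hm : (0:ℝ) ≤ m := Nat.cast_nonneg m
    have := mem_setOf.mp hs
    linarith
  have hc : ContinuousOn (deriv Complex.Gamma) {s : ℂ | 0 < s.re} :=
    ((hd.analyticOnNhd hU).deriv).continuousOn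
  have hc2 : ContinuousOn (fun x : ℝ => (deriv Complex.Gamma (x:ℂ)).re) (Ioi 0) := by
    refine Complex.continuous_re.comp_continuousOn ?_
    refine hc.comp Complex.continuous_ofReal.continuousOn (fun x hx => ?_)
    simpa using mem_Ioi.mp hx
  have hg : ContinuousOn Real.Gamma (Ioi 0) := fun x hx =>
    (diffGamma (mem_Ioi.mp hx)).continuousAt.continuousWithinAt
  have h1 : ContinuousOn (fun x => deriv Real.Gamma x) (Ioi 0) :=
    hc2.congr (fun x hx => deriv_gamma_eq (mem_Ioi.mp hx))
  exact h1.div hg (fun x hx => (Real.Gamma_pos_of_pos (mem_Ioi.mp hx)).ne')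

/-- The auxiliary function `F x = log Γ(x) - x ψ(x)`. -/
noncomputable def Fcrit (x : ℝ) : ℝ := Real.log (Real.Gamma x) - x * digamma x

lemma Fcrit_strictAnti {a b : ℝ} (ha : 0 < a) (hab : a < b) : Fcrit b < Fcrit a := by
  have hb : 0 < b := ha.trans hab
  have hsl := convexLG.slope_le_deriv (mem_Ioi.mpr ha) (mem_Ioi.mpr hb) hab
    (hasDerivAt_logGamma hb).differentiableAt
  rw [deriv_logGamma hb, slope_def_field] at hsl
  have h2 : Real.log (Real.Gamma b) - Real.log (Real.Gamma a) ≤ digamma b * (b - a) := by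
    rwa [div_le_iff₀ (by linarith)] at hsl
  have h3 : digamma a < digamma b := psi_strictMono ha hab
  have h4 : a * digamma a < a * digamma b := by
    exact mul_lt_mul_of_pos_left h3 ha
  unfold Fcrit
  nlinarith

lemma psi_one_neg : digamma 1 < 0 := by
  -- digamma 1 ≤ slope (log Γ) 1 2 = 0; if equal, log Γ strictly increasing on [1,2], contradiction
  have h1 := convexLG.deriv_le_slope (mem_Ioi.mpr one_pos) (mem_Ioi.mpr two_pos)
    one_lt_two (hasDerivAt_logGamma one_pos).differentiableAt
  rw [deriv_logGamma one_pos, slope_def_field, Real.Gamma_two, Real.Gamma_one, Real.log_one] at h1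
  norm_num at h1
  rcases h1.lt_or_eq with h | h
  · exact h
  · exfalso
    have hmono : StrictMonoOn (fun y => Real.log (Real.Gamma y)) (Icc 1 2) := by
      refine strictMonoOn_of_deriv_pos (convex_Icc 1 2) ?_ ?_
      · intro x hx
        exact ((diffGamma (by linarith [hx.1] : (0:ℝ) < x)).continuousAt.log
          (Real.Gamma_pos_of_pos (by linarith [hx.1])).ne').continuousWithinAt
      · intro x hx
        rw [interior_Icc] at hx
        rw [deriv_logGamma (by linarith [hx.1] : (0:ℝ) < x)]
        have := psi_strictMono one_pos hx.1
        linarith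
    have := hmono (left_mem_Icc.mpr one_le_two) (right_mem_Icc.mpr one_le_two) one_lt_two
    simp only [Real.Gamma_two, Real.Gamma_one, Real.log_one] at this
    exact lt_irrefl 0 this

lemma psi_two_pos : 0 < digamma 2 := by
  have := psi_rec one_pos
  have h1 := psi_one_neg
  -- digamma 2 = digamma 1 + 1; need digamma 1 > -1? Not directly. Use slope instead.
  have h2 := convexLG.slope_le_deriv (mem_Ioi.mpr one_pos) (mem_Ioi.mpr two_pos)
    one_lt_two (hasDerivAt_logGamma two_pos).differentiableAt
  rw [deriv_logGamma two_pos, slope_def_field, Real.Gamma_two, Real.Gamma_one, Real.log_one] at h2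
  norm_num at h2
  rcases h2.lt_or_eq with h | h
  · exact h
  · exfalso
    have hmono : StrictAntiOn (fun y => Real.log (Real.Gamma y)) (Icc 1 2) := by
      refine strictAntiOn_of_deriv_neg (convex_Icc 1 2) ?_ ?_
      · intro x hx
        exact ((diffGamma (by linarith [hx.1] : (0:ℝ) < x)).continuousAt.log
          (Real.Gamma_pos_of_pos (by linarith [hx.1])).ne').continuousWithinAt
      · intro x hx
        rw [interior_Icc] at hx
        rw [deriv_logGamma (by linarith [hx.1] : (0:ℝ) < x)]
        have := psi_strictMono (by linarith [hx.1] : (0:ℝ) < x) hx.2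
        rw [← h] at this
        linarith
    have := hmono (left_mem_Icc.mpr one_le_two) (right_mem_Icc.mpr one_le_two) one_lt_two
    simp only [Real.Gamma_two, Real.Gamma_one, Real.log_one] at this
    exact lt_irrefl 0 this

lemma Fcrit_cont : ContinuousOn Fcrit (Icc 1 2) := by
  have hsub : Icc (1:ℝ) 2 ⊆ Ioi 0 := fun x hx => by
    simp only [mem_Ioi]; linarith [hx.1]
  have h1 : ContinuousOn (fun y => Real.log (Real.Gamma y)) (Ioi 0) := fun x hx =>
    ((diffGamma (mem_Ioi.mp hx)).continuousAt.log
      (Real.Gamma_pos_of_pos (mem_Ioi.mp hx)).ne').continuousWithinAt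
  exact ((h1.mono hsub).sub ((continuousOn_id).mul (contOn_digamma.mono hsub)))

theorem critical_gamma_exists_unique (γfun : ℝ → ℝ)
    (hγ : ∀ lam : ℝ, 0 < lam →
      0 < γfun lam ∧ Real.exp (digamma (γfun lam)) = lam)
    (L : ℝ → ℝ)
    (hL : ∀ lam : ℝ, 0 < lam → L lam = Real.Gamma (γfun lam) / lam ^ γfun lam) :
    (∃ γcr : ℝ, 1 < γcr ∧ γcr < 2 ∧
      Real.Gamma γcr = Real.exp (γcr * digamma γcr) ∧
      ∀ γ : ℝ, 0 < γ → Real.Gamma γ = Real.exp (γ * digamma γ) → γ = γcr) ∧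
    (∃! lam : ℝ, 0 < lam ∧ L lam = 1) := by
  -- F values at the endpoints
  have hF1 : 0 < Fcrit 1 := by
    unfold Fcrit
    rw [Real.Gamma_one, Real.log_one]
    have := psi_one_neg; linarith
  have hF2 : Fcrit 2 < 0 := by
    unfold Fcrit
    rw [Real.Gamma_two, Real.log_one]
    have := psi_two_pos; linarith
  -- existence of a zero of F in (1,2)
  obtain ⟨γcr, hγmem, hγeq⟩ : ∃ x ∈ Ioo (1:ℝ) 2, Fcrit x = 0 := by
    have := intermediate_value_Ioo' (le_of_lt one_lt_two) Fcrit_cont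
      (mem_Ioo.mpr ⟨hF2, hF1⟩)
    obtain ⟨x, hx, hfx⟩ := this
    exact ⟨x, hx, hfx⟩
  have hγpos : 0 < γcr := by linarith [hγmem.1]
  -- characterization: for γ > 0, Γ γ = exp (γ ψ γ) ↔ Fcrit γ = 0
  have hchar : ∀ γ : ℝ, 0 < γ → (Real.Gamma γ = Real.exp (γ * digamma γ) ↔ Fcrit γ = 0) := by
    intro γ hγ0
    constructor
    · intro h
      unfold Fcrit
      rw [h, Real.log_exp]; ring
    · intro h
      have : Real.log (Real.Gamma γ) = γ * digamma γ := by unfold Fcrit at h; linarith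
      rw [← this, Real.exp_log (Real.Gamma_pos_of_pos hγ0)]
  -- uniqueness of the zero of F on (0, ∞)
  have huniqF : ∀ γ : ℝ, 0 < γ → Fcrit γ = 0 → γ = γcr := by
    intro γ h0 hz
    rcases lt_trichotomy γ γcr with h | h | h
    · have := Fcrit_strictAnti h0 h; rw [hz, hγeq] at this; linarith
    · exact h
    · have := Fcrit_strictAnti hγpos h; rw [hz, hγeq] at this; linarith
  have hmain : Real.Gamma γcr = Real.exp (γcr * digamma γcr) := (hchar γcr hγpos).mpr hγeq
  refine ⟨⟨γcr, hγmem.1, hγmem.2, hmain, fun γ h0 heq => huniqF γ h0 ((hchar γ h0).mp heq)⟩, ?_⟩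
  -- second part
  set lam := Real.exp (digamma γcr) with hlam
  have hlampos : 0 < lam := Real.exp_pos _
  have hrpow : ∀ γ' : ℝ, ∀ l : ℝ, l = Real.exp (digamma γ') →
      l ^ γ' = Real.exp (γ' * digamma γ') := by
    intro γ' l hl
    rw [hl, ← Real.exp_mul, mul_comm]
  -- γfun of any positive lam' with exp(ψ (γfun lam')) = lam': if lam' = lam then γfun lam' = γcr
  have hγfun_eq : ∀ l : ℝ, 0 < l → l = Real.exp (digamma γcr) → γfun l = γcr := by
    intro l hl hleq
    obtain ⟨hpos, hexp⟩ := hγ l hl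
    have : Real.exp (digamma (γfun l)) = Real.exp (digamma γcr) := by rw [hexp, hleq]
    have hψ : digamma (γfun l) = digamma γcr := Real.exp_injective this
    rcases lt_trichotomy (γfun l) γcr with h | h | h
    · have := psi_strictMono hpos h; rw [hψ] at this; linarith
    · exact h
    · have := psi_strictMono hγpos h; rw [hψ] at this; linarith
  refine ⟨lam, ⟨hlampos, ?_⟩, ?_⟩
  · rw [hL lam hlampos, hγfun_eq lam hlampos rfl, hrpow γcr lam hlam, ← hmain,
      div_self (Real.Gamma_pos_of_pos hγpos).ne']
  · rintro l ⟨hl, hLl⟩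
    obtain ⟨hpos, hexp⟩ := hγ l hl
    rw [hL l hl] at hLl
    have hlpow : l ^ γfun l = Real.exp (γfun l * digamma (γfun l)) :=
      hrpow (γfun l) l hexp.symm
    have hpowpos : (0:ℝ) < l ^ γfun l := Real.rpow_pos_of_pos hl _
    have hGeq : Real.Gamma (γfun l) = Real.exp (γfun l * digamma (γfun l)) := by
      rw [← hlpow]
      field_simp at hLl
      exact hLl
    have := huniqF (γfun l) hpos ((hchar (γfun l) hpos).mp hGeq)
    rw [← hexp, this]
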